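/- arXiv:1712.03938 — 2 statements merged into one kernel-verified Lean document; each statement's English description precedes it below -/
import Mathlib

section
/- Let $A = \mathbb{Q}[y_1,\ldots,y_n]$, let $M$ and $N$ be finite complexes of finitely generated free graded $A$-modules, and let $f : M \to N$ be a chain map. Suppose $H^*(M)$ is a free $A$-module. If the induced map on homology with coefficients $f^*_\nu : H^*(M \otimes_A \mathbb{Q}_\nu) \to H^*(N \otimes_A \mathbb{Q}_\nu)$ is injective for all generic $\nu$ (all $\nu$ with pairwise distinct coordinates), then $f^* : H^*(M) \to H^*(N)$ is injective. -/
set_option synthInstance.maxHeartbeats 1000000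
set_option maxHeartbeats 1000000

open MvPolynomial

/-- `A = ℚ[y₁,…,y_n]`, positively graded with each `yᵢ` in degree `1`. -/
abbrev Ay (n : ℕ) : Type := MvPolynomial (Fin n) ℚ

/-- A finite complex of finitely generated free graded `A`-modules, presented by
homogeneous matrices: in homological degree `k` the module is free on `r k`
generators, the `i`-th generator sitting in internal degree `g k i`, and the
differential `C_k → C_{k+1}` is given by the matrix `D k`, whose entries are
homogeneous of the appropriate degrees. -/
structure GradedFreeComplex (n : ℕ) where
  r : ℤ → ℕ
  bounded : ∃ N : ℕ, ∀ k : ℤ, (N : ℤ) < |k| → r k = 0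
  g : ∀ k : ℤ, Fin (r k) → ℤ
  D : ∀ k : ℤ, Matrix (Fin (r (k + 1))) (Fin (r k)) (Ay n)
  hom : ∀ k i j, (D k i j).IsHomogeneous (g k j - g (k + 1) i).toNat
  hneg : ∀ k i j, g k j < g (k + 1) i → D k i j = 0
  dd : ∀ k, D (k + 1) * D k = 0

namespace GradedFreeComplex

variable {n : ℕ} (C : GradedFreeComplex n)

/-- The cycles of the complex at homological position `k + 1`. -/
noncomputable def cycles (k : ℤ) : Submodule (Ay n) (Fin (C.r (k + 1)) → Ay n) :=
  LinearMap.ker (C.D (k + 1)).mulVecLin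

/-- The boundaries, viewed inside the cycles at position `k + 1`. -/
noncomputable def boundaries (k : ℤ) : Submodule (Ay n) (C.cycles k) :=
  (LinearMap.range (C.D k).mulVecLin).comap (C.cycles k).subtype

/-- The homology of the complex at position `k + 1`. -/
noncomputable def Hml (k : ℤ) : Type := C.cycles k ⧸ C.boundaries k

noncomputable instance (k : ℤ) : AddCommGroup (C.Hml k) :=
  inferInstanceAs (AddCommGroup (C.cycles k ⧸ C.boundaries k))
noncomputable instance (k : ℤ) : Module (Ay n) (C.Hml k) :=
  inferInstanceAs (Module (Ay n) (C.cycles k ⧸ C.boundaries k))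
noncomputable instance (k : ℤ) : Module ℚ (C.Hml k) :=
  inferInstanceAs (Module ℚ (C.cycles k ⧸ C.boundaries k))

/-- The degree-`m` graded piece of `A` (zero for `m < 0`). -/
noncomputable def pieceA (n : ℕ) (m : ℤ) : Submodule ℚ (Ay n) :=
  if m < 0 then ⊥ else homogeneousSubmodule (Fin n) ℚ m.toNat

/-- The internal-degree-`j` graded piece of the chain module at position `k`. -/
noncomputable def piece (k j : ℤ) : Submodule ℚ (Fin (C.r k) → Ay n) :=
  Submodule.pi Set.univ fun i => pieceA n (j - C.g k i)

/-- The internal-degree-`j` graded piece of the homology at position `k + 1`. -/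
noncomputable def Hpiece (k j : ℤ) : Submodule ℚ (C.Hml k) :=
  ((C.piece (k + 1) j).comap ((C.cycles k).subtype.restrictScalars ℚ)).map
    ((C.boundaries k).mkQ.restrictScalars ℚ)

/-- The specialization of the differential at a point `ν ∈ ℚⁿ`
(for `ν = 0` this is the complex `C₀ = C ⊗_A ℚ`). -/
noncomputable def Dspec (ν : Fin n → ℚ) (k : ℤ) :
    Matrix (Fin (C.r (k + 1))) (Fin (C.r k)) ℚ :=
  (C.D k).map (eval ν)

/-- The cycles of the specialized complex at position `k + 1`. -/
noncomputable def cyclesSpec (ν : Fin n → ℚ) (k : ℤ) :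
    Submodule ℚ (Fin (C.r (k + 1)) → ℚ) :=
  LinearMap.ker (C.Dspec ν (k + 1)).mulVecLin

/-- The homology of the specialized complex at position `k + 1`. -/
noncomputable def HmlSpec (ν : Fin n → ℚ) (k : ℤ) : Type :=
  C.cyclesSpec ν k ⧸
    ((LinearMap.range (C.Dspec ν k).mulVecLin).comap (C.cyclesSpec ν k).subtype)

noncomputable instance (ν : Fin n → ℚ) (k : ℤ) : AddCommGroup (C.HmlSpec ν k) :=
  inferInstanceAs (AddCommGroup (_ ⧸ _))
noncomputable instance (ν : Fin n → ℚ) (k : ℤ) : Module ℚ (C.HmlSpec ν k) :=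
  inferInstanceAs (Module ℚ (_ ⧸ _))

/-- The internal-degree-`j` piece of the chain module of `C₀`: vectors supported on
the generators of internal degree `j`. -/
noncomputable def piece0 (k j : ℤ) : Submodule ℚ (Fin (C.r k) → ℚ) :=
  Submodule.pi Set.univ fun i => if C.g k i = j then ⊤ else ⊥

/-- The internal-degree-`j` graded piece of the homology of `C₀` at position `k+1`. -/
noncomputable def H0piece (k j : ℤ) : Submodule ℚ (C.HmlSpec 0 k) :=
  ((C.piece0 (k + 1) j).comap (C.cyclesSpec 0 k).subtype).map
    ((LinearMap.range (C.Dspec 0 k).mulVecLin).comap (C.cyclesSpec 0 k).subtype).mkQ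

end GradedFreeComplex


namespace GradedFreeComplex

variable {n : ℕ} (C : GradedFreeComplex n)

/-- The boundaries of the complex at position `k + 1`, viewed in the ambient module. -/
noncomputable def Bd (k : ℤ) : Submodule (Ay n) (Fin (C.r (k + 1)) → Ay n) :=
  LinearMap.range (C.D k).mulVecLin

lemma Bd_le_cycles (k : ℤ) : C.Bd k ≤ C.cycles k := by
  rintro x ⟨u, rfl⟩
  show (C.D (k + 1)).mulVecLin ((C.D k).mulVecLin u) = 0
  rw [← LinearMap.comp_apply, ← Matrix.mulVecLin_mul, C.dd k]
  simp

lemma exists_retraction (k : ℤ) (hP : Module.Projective (Ay n) (C.Bd (k + 1))) :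
    ∃ ρ : (Fin (C.r (k + 1)) → Ay n) →ₗ[Ay n] C.cycles k,
      ρ.comp (C.cycles k).subtype = LinearMap.id := by
  set f := (C.D (k + 1)).mulVecLin with hf
  haveI : Module.Projective (Ay n) (LinearMap.range f) := hP
  obtain ⟨s, hs⟩ := Module.projective_lifting_property f.rangeRestrict
    (LinearMap.id : LinearMap.range f →ₗ[Ay n] _) f.surjective_rangeRestrict
  set ρ0 : (Fin (C.r (k + 1)) → Ay n) →ₗ[Ay n] (Fin (C.r (k + 1)) → Ay n) :=
    LinearMap.id - s.comp f.rangeRestrict with hρ0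
  have key : ∀ x, f (ρ0 x) = 0 := by
    intro x
    have h0 : f.rangeRestrict (s (f.rangeRestrict x)) = f.rangeRestrict x :=
      LinearMap.congr_fun hs (f.rangeRestrict x)
    have h1 : f (s (f.rangeRestrict x)) = f x := congrArg Subtype.val h0
    rw [hρ0]
    simp only [LinearMap.sub_apply, LinearMap.id_apply, LinearMap.comp_apply, map_sub, h1,
      sub_self]
  refine ⟨ρ0.codRestrict (C.cycles k) (fun x => key x), ?_⟩
  refine LinearMap.ext fun zz => ?_
  apply Subtype.ext
  have hz0 : f.rangeRestrict (↑zz) = 0 := Subtype.ext (show f (↑zz) = 0 from zz.2)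
  simp only [LinearMap.comp_apply, LinearMap.codRestrict_apply, hρ0, LinearMap.sub_apply,
    LinearMap.id_apply, hz0, map_zero, sub_zero, Submodule.coe_subtype]

lemma projective_Bd (hfree : ∀ k : ℤ, Module.Free (Ay n) (C.Hml k)) (k : ℤ) :
    Module.Projective (Ay n) (C.Bd k) := by
  obtain ⟨N₀, hN₀⟩ := C.bounded
  suffices H : ∀ j : ℕ, ∀ k : ℤ, (N₀ : ℤ) ≤ k + j → Module.Projective (Ay n) (C.Bd k) by
    by_cases hk : (N₀ : ℤ) ≤ k
    · exact H 0 k (by omega)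
    · exact H (N₀ - k).toNat k (by omega)
  intro j
  induction j with
  | zero =>
    intro k hk
    have hr : C.r (k + 1) = 0 := by
      apply hN₀
      have : |k + 1| = k + 1 := abs_of_pos (by omega)
      omega
    haveI : IsEmpty (Fin (C.r (k + 1))) := by rw [hr]; infer_instance
    haveI : Subsingleton (Fin (C.r (k + 1)) → Ay n) :=
      ⟨fun a b => funext fun i => isEmptyElim i⟩
    infer_instance
  | succ j ih =>
    intro k hk
    have hBd1 : Module.Projective (Ay n) (C.Bd (k + 1)) := ih (k + 1) (by push_cast at hk ⊢; omega)
    obtain ⟨ρ, hρ⟩ := C.exists_retraction k hBd1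
    haveI hZ : Module.Projective (Ay n) (C.cycles k) :=
      Module.Projective.of_split (C.cycles k).subtype ρ hρ
    haveI := hfree k
    obtain ⟨t, ht⟩ := Module.projective_lifting_property (C.boundaries k).mkQ
      (LinearMap.id : C.Hml k →ₗ[Ay n] C.Hml k) (Submodule.mkQ_surjective _)
    set r2 : C.cycles k →ₗ[Ay n] C.cycles k := LinearMap.id - t.comp (C.boundaries k).mkQ with hr2
    have hmem : ∀ x, r2 x ∈ C.boundaries k := by
      intro x
      have h1 : (C.boundaries k).mkQ (r2 x) = 0 := by
        have h2 : (C.boundaries k).mkQ (t ((C.boundaries k).mkQ x)) = (C.boundaries k).mkQ x :=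
          LinearMap.congr_fun ht ((C.boundaries k).mkQ x)
        rw [hr2]
        simp only [LinearMap.sub_apply, LinearMap.id_apply, LinearMap.comp_apply, map_sub]
        exact sub_eq_zero_of_eq h2.symm
      rwa [← Submodule.Quotient.mk_eq_zero, ← Submodule.mkQ_apply]
    haveI hB : Module.Projective (Ay n) (C.boundaries k) := by
      refine Module.Projective.of_split (C.boundaries k).subtype
        (r2.codRestrict (C.boundaries k) hmem) ?_
      refine LinearMap.ext fun b => ?_
      apply Subtype.ext
      have hb0 : (C.boundaries k).mkQ (↑b) = 0 := by
        rw [Submodule.mkQ_apply, Submodule.Quotient.mk_eq_zero]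
        exact b.2
      simp only [LinearMap.comp_apply, LinearMap.codRestrict_apply, hr2, LinearMap.sub_apply,
        LinearMap.id_apply, Submodule.coe_subtype]
      exact sub_eq_self.mpr ((congrArg (fun y => t y) hb0).trans (map_zero t))
    haveI : Module.Projective (Ay n) (Submodule.comap (C.cycles k).subtype (C.Bd k)) := hB
    exact Module.Projective.of_equiv (Submodule.comapSubtypeEquivOfLe (C.Bd_le_cycles k))

end GradedFreeComplex

open GradedFreeComplex in
/-- Let `M`, `N` be finite complexes of finitely generated free graded modules over
`A = ℚ[y₁,…,y_n]` and `f : M → N` a (degree-preserving) chain map, given by the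
homogeneous matrices `F k`.  Suppose `H^*(M)` is a free `A`-module.  If the induced
map `f^*_ν : H^*(M ⊗_A ℚ_ν) → H^*(N ⊗_A ℚ_ν)` is injective for every generic `ν`
(pairwise distinct coordinates) — i.e. every cycle of `M_ν` whose image is a boundary
is itself a boundary — then `f^* : H^*(M) → H^*(N)` is injective. -/
theorem homology_map_injective_of_generic_injective
    (n : ℕ) (M N : GradedFreeComplex n)
    (F : ∀ k : ℤ, Matrix (Fin (N.r k)) (Fin (M.r k)) (Ay n))
    (Fchain : ∀ k : ℤ, F (k + 1) * M.D k = N.D k * F k)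
    (Fhom : ∀ k i j, (F k i j).IsHomogeneous (M.g k j - N.g k i).toNat)
    (Fneg : ∀ k i j, M.g k j < N.g k i → F k i j = 0)
    (hfree : ∀ k : ℤ, Module.Free (Ay n) (M.Hml k))
    (hinj : ∀ ν : Fin n → ℚ, (∀ i j : Fin n, i ≠ j → ν i ≠ ν j) →
      ∀ (k : ℤ) (z : Fin (M.r (k + 1)) → ℚ),
        (M.Dspec ν (k + 1)).mulVecLin z = 0 →
        (∃ w, ((F (k + 1)).map (MvPolynomial.eval ν)).mulVecLin z =
          (N.Dspec ν k).mulVecLin w) →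
        ∃ u, (M.Dspec ν k).mulVecLin u = z) :
    ∀ (k : ℤ) (z : Fin (M.r (k + 1)) → Ay n),
      (M.D (k + 1)).mulVecLin z = 0 →
      (∃ w, (F (k + 1)).mulVecLin z = (N.D k).mulVecLin w) →
      ∃ u, (M.D k).mulVecLin u = z := by
  intro k z hz hFz
  by_contra hne
  push_neg at hne
  have hzc : z ∈ M.cycles k := hz
  haveI := hfree k
  have h0 : (M.boundaries k).mkQ ⟨z, hzc⟩ ≠ 0 := by
    intro h
    rw [Submodule.mkQ_apply, Submodule.Quotient.mk_eq_zero] at h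
    obtain ⟨u, hu⟩ := h
    exact hne u hu
  let b := Module.Free.chooseBasis (Ay n) (M.Hml k)
  obtain ⟨i, hi⟩ : ∃ i, b.coord i ((M.boundaries k).mkQ ⟨z, hzc⟩) ≠ 0 := by
    by_contra hall
    push_neg at hall
    apply h0
    apply b.ext_elem_iff.mpr
    intro i
    exact (hall i).trans (map_zero (b.coord i)).symm
  set p := b.coord i ((M.boundaries k).mkQ ⟨z, hzc⟩) with hp
  set q := p * ∏ x ∈ Finset.univ.offDiag, (X x.1 - X x.2 : Ay n) with hqdef
  have hq : q ≠ 0 := mul_ne_zero hi (Finset.prod_ne_zero_iff.mpr fun x hx =>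
    sub_ne_zero.mpr fun hXX => (Finset.mem_offDiag.mp hx).2.2 (MvPolynomial.X_injective hXX))
  obtain ⟨ν, hνq⟩ : ∃ ν : Fin n → ℚ, eval ν q ≠ 0 := by
    by_contra hall
    push_neg at hall
    exact hq (MvPolynomial.funext fun ν => (hall ν).trans (map_zero _).symm)
  have hqeval : eval ν q = eval ν p * ∏ x ∈ Finset.univ.offDiag, (ν x.1 - ν x.2) := by
    rw [hqdef, map_mul, map_prod]
    simp
  have hgen : ∀ a c : Fin n, a ≠ c → ν a ≠ ν c := by
    intro a c hac hν
    apply hνq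
    have hz0 : (∏ x ∈ Finset.univ.offDiag, (ν x.1 - ν x.2)) = 0 :=
      Finset.prod_eq_zero (i := (a, c))
        (Finset.mem_offDiag.mpr ⟨Finset.mem_univ _, Finset.mem_univ _, hac⟩)
        (by simp [hν])
    rw [hqeval, hz0, mul_zero]
  have hpν : eval ν p ≠ 0 := fun h => hνq (by rw [hqeval, h, zero_mul])
  have hcomm : ∀ {a c : ℕ} (Dm : Matrix (Fin a) (Fin c) (Ay n)) (v : Fin c → Ay n),
      (Dm.map (eval ν)).mulVecLin (fun i => eval ν (v i))
        = fun i => eval ν (Dm.mulVecLin v i) := by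
    intro a c Dm v
    funext i
    rw [Matrix.mulVecLin_apply, Matrix.mulVecLin_apply]
    exact (RingHom.map_mulVec (eval ν) Dm v i).symm
  have h1 : (M.Dspec ν (k + 1)).mulVecLin (fun i => eval ν (z i)) = 0 := by
    show ((M.D (k + 1)).map (eval ν)).mulVecLin (fun i => eval ν (z i)) = 0
    rw [hcomm (M.D (k + 1)) z]
    funext i
    rw [hz]
    simp
  have h2 : ∃ w, ((F (k + 1)).map (eval ν)).mulVecLin (fun i => eval ν (z i))
      = (N.Dspec ν k).mulVecLin w := by
    obtain ⟨w₀, hw₀⟩ := hFz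
    refine ⟨fun i => eval ν (w₀ i), ?_⟩
    show _ = ((N.D k).map (eval ν)).mulVecLin _
    rw [hcomm (F (k + 1)) z, hcomm (N.D k) w₀]
    simp only [hw₀]
  obtain ⟨u, hu⟩ := hinj ν hgen k _ h1 h2
  obtain ⟨ρ, hρ⟩ := M.exists_retraction k (M.projective_Bd hfree (k + 1))
  set L : (Fin (M.r (k + 1)) → Ay n) →ₗ[Ay n] Ay n :=
    (b.coord i) ∘ₗ ((M.boundaries k).mkQ ∘ₗ ρ) with hL
  set w : Fin (M.r (k + 1)) → Ay n
    := z - (M.D k).mulVecLin (fun j => MvPolynomial.C (u j)) with hw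
  have hwc_bd : (M.D k).mulVecLin (fun j => MvPolynomial.C (u j)) ∈ M.cycles k :=
    M.Bd_le_cycles k ⟨_, rfl⟩
  have hρz : ρ z = ⟨z, hzc⟩ := by
    have := LinearMap.congr_fun hρ ⟨z, hzc⟩
    simpa using this
  have hLz : L z = p := by
    rw [hL]
    simp only [LinearMap.comp_apply, hρz]
    exact congrArg (fun y => b.coord i ((M.boundaries k).mkQ y)) hρz
  have hρb : ρ ((M.D k).mulVecLin (fun j => MvPolynomial.C (u j))) = ⟨_, hwc_bd⟩ := by
    have := LinearMap.congr_fun hρ ⟨_, hwc_bd⟩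
    simpa using this
  have hbmem : (⟨_, hwc_bd⟩ : M.cycles k) ∈ M.boundaries k :=
    LinearMap.mem_range.mpr ⟨_, rfl⟩
  have hLb : L ((M.D k).mulVecLin (fun j => MvPolynomial.C (u j))) = 0 := by
    rw [hL]
    simp only [LinearMap.comp_apply, hρb]
    have hQ : (M.boundaries k).mkQ (⟨_, hwc_bd⟩ : M.cycles k) = 0 :=
      (Submodule.Quotient.mk_eq_zero _).mpr hbmem
    exact (congrArg (fun y => b.coord i ((M.boundaries k).mkQ y)) hρb).trans
      ((congrArg (fun y => b.coord i y) hQ).trans (map_zero _))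
  have hLw : L w = p := by
    rw [hw, map_sub, hLz, hLb, sub_zero]
  have hwν : ∀ j, eval ν (w j) = 0 := by
    intro j
    have e1 : (fun i => eval ν (MvPolynomial.C (u i) : Ay n)) = u := by
      funext i; simp
    have step : eval ν ((M.D k).mulVecLin (fun j => MvPolynomial.C (u j)) j)
        = eval ν (z j) := by
      calc eval ν ((M.D k).mulVecLin (fun j => MvPolynomial.C (u j)) j)
          = ((M.D k).map (eval ν)).mulVecLin
              (fun i => eval ν (MvPolynomial.C (u i) : Ay n)) j :=
            (congrFun (hcomm (M.D k) (fun j => MvPolynomial.C (u j))) j).symm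
        _ = (M.Dspec ν k).mulVecLin u j := by rw [e1]; rfl
        _ = eval ν (z j) := congrFun hu j
    rw [hw, Pi.sub_apply, map_sub, step, sub_self]
  have hLν : eval ν (L w) = 0 := by
    rw [pi_eq_sum_univ w, map_sum, map_sum]
    apply Finset.sum_eq_zero
    intro j _
    rw [map_smul, smul_eq_mul, map_mul, hwν j, zero_mul]
  rw [hLw] at hLν
  exact hpν hLν
end

section
/- In $\mathbb{Q}[x_1,\ldots,x_n,y_1,\ldots,y_n]$, the product of ideals $\mathcal{J}_{1,n}\mathcal{J}_{2,n}\cdots\mathcal{J}_{n-1,n}$, where $\mathcal{J}_{i,n} = (x_i - x_n,\, y_i - y_n)$, equals the intersection $\bigcap_{i=1}^{n-1} \mathcal{J}_{i,n}$. -/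
open MvPolynomial

/-- Variables: `X (inl i) = xᵢ`, `X (inr i) = yᵢ`, for `i : Fin (n+1)`
(so there are `n+1` pairs of variables, the last one playing the role of `(x_n, y_n)`). -/
abbrev JMring (n : ℕ) : Type := MvPolynomial (Fin (n + 1) ⊕ Fin (n + 1)) ℚ

/-- The ideal `𝒥_{i,n} = (xᵢ - x_n, yᵢ - y_n)` for `i < n`. -/
noncomputable def Jin (n : ℕ) (i : Fin n) : Ideal (JMring n) :=
  Ideal.span {X (Sum.inl i.castSucc) - X (Sum.inl (Fin.last n)),
    X (Sum.inr i.castSucc) - X (Sum.inr (Fin.last n))}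

/-- The "coordinate ideal" `(xᵢ, yᵢ)`. -/
noncomputable def Kin (n : ℕ) (i : Fin n) : Ideal (JMring n) :=
  Ideal.span {X (Sum.inl i.castSucc), X (Sum.inr i.castSucc)}

/-- Change of variables: `xᵢ ↦ xᵢ + x_n` (for `i < n`), `x_n ↦ x_n`; same for `y`. -/
noncomputable def jphi (n : ℕ) : JMring n →ₐ[ℚ] JMring n :=
  aeval (Sum.elim
    (fun i => if i = Fin.last n then X (Sum.inl (Fin.last n))
      else X (Sum.inl i) + X (Sum.inl (Fin.last n)))
    (fun i => if i = Fin.last n then X (Sum.inr (Fin.last n))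
      else X (Sum.inr i) + X (Sum.inr (Fin.last n))))

/-- Inverse change of variables: `xᵢ ↦ xᵢ - x_n` (for `i < n`), `x_n ↦ x_n`; same for `y`. -/
noncomputable def jpsi (n : ℕ) : JMring n →ₐ[ℚ] JMring n :=
  aeval (Sum.elim
    (fun i => if i = Fin.last n then X (Sum.inl (Fin.last n))
      else X (Sum.inl i) - X (Sum.inl (Fin.last n)))
    (fun i => if i = Fin.last n then X (Sum.inr (Fin.last n))
      else X (Sum.inr i) - X (Sum.inr (Fin.last n))))

lemma jpsi_comp_jphi (n : ℕ) : (jpsi n).comp (jphi n) = AlgHom.id ℚ (JMring n) := by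
  apply algHom_ext
  rintro (i | i) <;> by_cases hi : i = Fin.last n <;>
    simp [jphi, jpsi, hi]

lemma jpsi_jphi_apply (n : ℕ) (f : JMring n) : jpsi n (jphi n f) = f := by
  have := AlgHom.congr_fun (jpsi_comp_jphi n) f
  simpa using this

lemma map_jphi_Jin (n : ℕ) (i : Fin n) :
    Ideal.map (jphi n) (Jin n i) = Kin n i := by
  have hne : i.castSucc ≠ Fin.last n := (Fin.castSucc_lt_last i).ne
  rw [Jin, Ideal.map_span, Kin]
  congr 1
  rw [Set.image_insert_eq, Set.image_singleton]
  simp [jphi, hne]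

lemma map_jpsi_Kin (n : ℕ) (i : Fin n) :
    Ideal.map (jpsi n) (Kin n i) = Jin n i := by
  have hne : i.castSucc ≠ Fin.last n := (Fin.castSucc_lt_last i).ne
  rw [Kin, Ideal.map_span, Jin]
  congr 1
  rw [Set.image_insert_eq, Set.image_singleton]
  simp [jpsi, hne]

lemma ideal_map_finset_prod {R S F : Type*} [CommRing R] [CommRing S] [FunLike F R S]
    [RingHomClass F R S] (f : F)
    {ι : Type*} (s : Finset ι) (J : ι → Ideal R) :
    Ideal.map f (∏ i ∈ s, J i) = ∏ i ∈ s, Ideal.map f (J i) := by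
  classical
  induction s using Finset.induction with
  | empty => simpa using Ideal.map_top f
  | insert _ _ hx ih =>
      rw [Finset.prod_insert hx, Finset.prod_insert hx, Ideal.map_mul, ih]

lemma prod_X_eq_monomial (n : ℕ) {ι : Type*} (s : Finset ι)
    (d : ι → (Fin (n + 1) ⊕ Fin (n + 1))) :
    (∏ i ∈ s, X (d i) : JMring n) =
      monomial (∑ i ∈ s, Finsupp.single (d i) 1) 1 := by
  classical
  induction s using Finset.induction with
  | empty => simp
  | insert _ _ hx ih =>
      rw [Finset.prod_insert hx, Finset.sum_insert hx, ih,
        ← pow_one (X (d _) : JMring n), X_pow_eq_monomial, monomial_mul, one_mul]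

lemma inf_Kin_le_prod (n : ℕ) : (⨅ i : Fin n, Kin n i) ≤ ∏ i : Fin n, Kin n i := by
  classical
  intro f hf
  rw [Ideal.mem_iInf] at hf
  have hsupp : ∀ (i : Fin n), ∀ m ∈ f.support,
      (m (Sum.inl i.castSucc) ≠ 0) ∨ (m (Sum.inr i.castSucc) ≠ 0) := by
    intro i m hm
    have h := hf i
    rw [Kin, show ({X (Sum.inl i.castSucc), X (Sum.inr i.castSucc)} : Set (JMring n))
        = X '' {Sum.inl i.castSucc, Sum.inr i.castSucc} by
          rw [Set.image_insert_eq, Set.image_singleton],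
      mem_ideal_span_X_image] at h
    obtain ⟨j, hj, hne⟩ := h m hm
    rcases hj with rfl | hj
    · exact Or.inl hne
    · rw [Set.mem_singleton_iff] at hj
      subst hj
      exact Or.inr hne
  nth_rewrite 1 [f.as_sum]
  apply Ideal.sum_mem
  intro m hm
  set d : Fin n → (Fin (n + 1) ⊕ Fin (n + 1)) := fun i =>
    if m (Sum.inl i.castSucc) ≠ 0 then Sum.inl i.castSucc else Sum.inr i.castSucc with hd
  have hdmem : ∀ i : Fin n, X (d i) ∈ Kin n i := by
    intro i
    rw [hd]
    dsimp only
    unfold Kin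
    split_ifs with h
    · exact Ideal.subset_span (Set.mem_insert _ _)
    · exact Ideal.subset_span (Set.mem_insert_of_mem _ rfl)
  have hdne : ∀ i : Fin n, m (d i) ≠ 0 := by
    intro i
    rw [hd]
    dsimp only
    split_ifs with h
    · exact h
    · rcases hsupp i m hm with h' | h'
      · exact absurd h' h
      · exact h'
  have hproj : ∀ i : Fin n,
      Sum.elim (id : Fin (n + 1) → Fin (n + 1)) (id : Fin (n + 1) → Fin (n + 1)) (d i)
        = i.castSucc := by
    intro i
    rw [hd]
    dsimp only
    split_ifs <;> rfl
  have hdinj : Function.Injective d := by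
    intro i j hij
    have h1 := hproj i
    rw [hij, hproj j] at h1
    exact Fin.castSucc_injective n h1.symm
  set e : (Fin (n + 1) ⊕ Fin (n + 1)) →₀ ℕ := ∑ i : Fin n, Finsupp.single (d i) 1 with he
  have hle : e ≤ m := by
    rw [Finsupp.le_def]
    intro v
    have hev : e v = ∑ i : Fin n, if d i = v then 1 else 0 := by
      rw [he, Finsupp.finset_sum_apply]
      simp [Finsupp.single_apply]
    by_cases hv : ∃ i : Fin n, d i = v
    · obtain ⟨i0, rfl⟩ := hv
      have : e (d i0) = 1 := by
        rw [hev]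
        rw [Finset.sum_eq_single i0]
        · simp
        · intro j _ hji
          exact if_neg (fun h => hji (hdinj h))
        · simp
      rw [this]
      exact Nat.one_le_iff_ne_zero.mpr (hdne i0)
    · push_neg at hv
      have : e v = 0 := by
        rw [hev]
        apply Finset.sum_eq_zero
        intro j _
        simp [hv j]
      simp [this]
  have key : (monomial m) (f.coeff m)
      = (∏ i : Fin n, X (d i)) * monomial (m - e) (f.coeff m) := by
    rw [prod_X_eq_monomial, ← he, monomial_mul, one_mul, add_tsub_cancel_of_le hle]
  rw [key]
  exact Ideal.mul_mem_right _ _ (Ideal.prod_mem_prod fun i _ => hdmem i)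

/-- In `ℚ[x₁,…,x_n,y₁,…,y_n]`, the product of the ideals `𝒥_{i,n} = (xᵢ-x_n, yᵢ-y_n)`
for `i = 1, …, n-1` equals their intersection. -/
theorem prod_Jin_eq_inf (n : ℕ) :
    ∏ i : Fin n, Jin n i = ⨅ i : Fin n, Jin n i := by
  apply le_antisymm
  · exact le_iInf fun i => Ideal.prod_le_inf.trans (Finset.inf_le (Finset.mem_univ i))
  · intro f hf
    rw [Ideal.mem_iInf] at hf
    have h1 : ∀ i : Fin n, jphi n f ∈ Kin n i := fun i =>
      map_jphi_Jin n i ▸ Ideal.mem_map_of_mem _ (hf i)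
    have h2 : jphi n f ∈ ∏ i : Fin n, Kin n i :=
      inf_Kin_le_prod n (Ideal.mem_iInf.mpr h1)
    have h3 : f ∈ Ideal.map (jpsi n) (∏ i : Fin n, Kin n i) := by
      have := Ideal.mem_map_of_mem (jpsi n) h2
      rwa [jpsi_jphi_apply] at this
    rwa [show Ideal.map (jpsi n) (∏ i : Fin n, Kin n i) = ∏ i : Fin n, Jin n i by
      rw [ideal_map_finset_prod (jpsi n)]
      exact Finset.prod_congr rfl fun i _ => map_jpsi_Kin n i] at h3
end
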